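/- Let 𝔾 = (V, E) be a finite simple undirected connected graph, let k ≥ 2 be an integer, and let i ∈ V with N_i^k nonempty. Let L_i^kc be the Laplacian matrix of the subgraph G_i = (N_i^k, E_i) induced by 𝔾 on N_i^k, and let H_i^kc be the diagonal matrix indexed by N_i^k whose diagonal entry at vertex v is the number of common neighbors |N_v ∩ N_i| of v and i in 𝔾. Then the matrix M_i^kc = L_i^kc + H_i^kc is symmetric positive definite. -/

import Mathlib

open Matrix

/-- The `k`-hop neighborhood of a vertex `i`: vertices at graph distance at least `2`
and at most `k` from `i`. -/
def khop {V : Type*} (G : SimpleGraph V) (k : ℕ) (i : V) : Set V :=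
  {v | 2 ≤ G.dist v i ∧ G.dist v i ≤ k}

open scoped Classical in
lemma khop_key {V : Type*} [Fintype V] [DecidableEq V] (G : SimpleGraph V)
    (hG : G.Connected) (k : ℕ) (i : V) :
    ∀ n : ℕ, ∀ v : khop G k i, G.dist (v : V) i = n →
      ∃ w : khop G k i, (G.induce (khop G k i)).Reachable v w ∧
        (G.neighborSet (w : V) ∩ G.neighborSet i).Nonempty := by
  intro n
  induction n using Nat.strong_induction_on with
  | _ n ih =>
    intro v hv
    have h2 : 2 ≤ G.dist (v : V) i := v.2.1
    have hk' : G.dist (v : V) i ≤ k := v.2.2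
    obtain ⟨p, hp⟩ := (hG (v : V) i).exists_walk_length_eq_dist
    have hnn : ¬ p.Nil := by
      refine SimpleGraph.Walk.not_nil_of_ne ?_
      intro h
      rw [h, SimpleGraph.dist_self] at h2; omega
    obtain ⟨u, hadj, q, rfl⟩ := (SimpleGraph.Walk.not_nil_iff).1 hnn
    have hql : q.length = n - 1 := by
      simp [SimpleGraph.Walk.length_cons] at hp; omega
    have hui_le : G.dist u i ≤ n - 1 := hql ▸ SimpleGraph.dist_le q
    have hvu : G.dist (v : V) i ≤ 1 + G.dist u i := by
      calc G.dist (v : V) i ≤ G.dist (v : V) u + G.dist u i := hG.dist_triangle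
      _ ≤ 1 + G.dist u i := by
          have := (SimpleGraph.dist_eq_one_iff_adj (G := G)).2 hadj
          omega
    have hui : G.dist u i = n - 1 := by omega
    by_cases hn2 : n = 2
    · refine ⟨v, SimpleGraph.Reachable.refl v, u, ?_⟩
      have : G.Adj u i := by
        rw [← SimpleGraph.dist_eq_one_iff_adj]; omega
      exact ⟨hadj, this.symm⟩
    · have hu_mem : u ∈ khop G k i := ⟨by omega, by omega⟩
      have hadj' : (G.induce (khop G k i)).Adj v ⟨u, hu_mem⟩ := hadj
      obtain ⟨w, hw1, hw2⟩ := ih (n - 1) (by omega) ⟨u, hu_mem⟩ hui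
      exact ⟨w, hadj'.reachable.trans hw1, hw2⟩

open scoped Classical in
/-- The matrix `M = L + H`, where `L` is the Laplacian of the subgraph induced on the
`k`-hop neighborhood of `i` and `H` is the diagonal matrix of numbers of common neighbors
with `i`, is symmetric positive definite. -/
theorem stmt3 {V : Type*} [Fintype V] [DecidableEq V] (G : SimpleGraph V)
    (hG : G.Connected) (k : ℕ) (hk : 2 ≤ k) (i : V) (hne : (khop G k i).Nonempty) :
    ((G.induce (khop G k i)).lapMatrix ℝ
      + Matrix.diagonal
          (fun v : khop G k i => ((G.neighborSet (v : V) ∩ G.neighborSet i).ncard : ℝ))).PosDef := by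
  set S := khop G k i
  set H := G.induce S
  set d : ↥S → ℝ := fun v => ((G.neighborSet (v : V) ∩ G.neighborSet i).ncard : ℝ)
  have hd0 : ∀ v, 0 ≤ d v := fun v => Nat.cast_nonneg _
  rw [Matrix.posDef_iff_dotProduct_mulVec]
  constructor
  · exact ((SimpleGraph.posSemidef_lapMatrix ℝ H).1).add (Matrix.isHermitian_diagonal d)
  · intro x hx
    simp only [Matrix.add_mulVec, dotProduct_add, star_trivial, RCLike.ofReal_real_eq_id]
    have hL : 0 ≤ x ⬝ᵥ H.lapMatrix ℝ *ᵥ x := by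
      have := (SimpleGraph.posSemidef_lapMatrix ℝ H).dotProduct_mulVec_nonneg x
      simpa using this
    have hDsum : x ⬝ᵥ Matrix.diagonal d *ᵥ x = ∑ v, d v * (x v)^2 := by
      simp [dotProduct, Matrix.mulVec_diagonal]
      exact Finset.sum_congr rfl fun v _ => by ring
    have hD0 : 0 ≤ x ⬝ᵥ Matrix.diagonal d *ᵥ x := by
      rw [hDsum]
      exact Finset.sum_nonneg fun v _ => mul_nonneg (hd0 v) (sq_nonneg _)
    rcases lt_or_eq_of_le hL with hLpos | hLzero
    · have : (0:ℝ) < x ⬝ᵥ H.lapMatrix ℝ *ᵥ x + x ⬝ᵥ Matrix.diagonal d *ᵥ x := by linarith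
      simpa using this
    · -- L quadratic form is zero: x constant on components
      have hconst : ∀ a b : ↥S, H.Reachable a b → x a = x b := by
        rw [← SimpleGraph.lapMatrix_toLinearMap₂'_apply'_eq_zero_iff_forall_reachable]
        rw [Matrix.toLinearMap₂'_apply']
        exact hLzero.symm
      obtain ⟨v, hxv⟩ : ∃ v, x v ≠ 0 := by
        by_contra h
        push_neg at h
        exact hx (funext h)
      obtain ⟨w, hreach, hcn⟩ := khop_key G hG k i (G.dist (v : V) i) v rfl
      have hxw : x w ≠ 0 := by rw [← hconst v w hreach]; exact hxv
      have hdw : 0 < d w := by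
        have : 0 < (G.neighborSet (w : V) ∩ G.neighborSet i).ncard :=
          hcn.ncard_pos (Set.toFinite _)
        show (0:ℝ) < ((G.neighborSet (w : V) ∩ G.neighborSet i).ncard : ℝ)
        exact_mod_cast this
      have hDpos : 0 < x ⬝ᵥ Matrix.diagonal d *ᵥ x := by
        rw [hDsum]
        refine Finset.sum_pos' (fun v _ => mul_nonneg (hd0 v) (sq_nonneg _)) ⟨w, Finset.mem_univ w, ?_⟩
        exact mul_pos hdw (by positivity)
      have : (0:ℝ) < x ⬝ᵥ H.lapMatrix ℝ *ᵥ x + x ⬝ᵥ Matrix.diagonal d *ᵥ x := by linarith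
      simpa using this
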